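/- arXiv:2010.09129 — 6 statements merged into one kernel-verified Lean document; each statement's English description precedes it below -/
import Mathlib

section
/- Let W = {(x3·conj(x1), x4·conj(x1), x3·conj(x2)) : x ∈ ℂ^4, ‖x‖ = 1} ⊆ ℂ^3. Then (0,0,1/2) ∈ W and (0,1/2,0) ∈ W, but (0,1/4,1/4) ∉ W. Consequently W is not convex. -/
theorem stmt_2
    (W : Set (ℂ × ℂ × ℂ))
    (hW : W = {p : ℂ × ℂ × ℂ | ∃ x : EuclideanSpace ℂ (Fin 4), ‖x‖ = 1 ∧
      p = (x 2 * starRingEnd ℂ (x 0), x 3 * starRingEnd ℂ (x 0), x 2 * starRingEnd ℂ (x 1))}) :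
    ((0, 0, 1/2) : ℂ × ℂ × ℂ) ∈ W ∧ ((0, 1/2, 0) : ℂ × ℂ × ℂ) ∈ W ∧
      ((0, 1/4, 1/4) : ℂ × ℂ × ℂ) ∉ W ∧ ¬ Convex ℝ W := by
  subst hW
  set c : ℝ := Real.sqrt (1/2) with hc
  have hc0 : (0:ℝ) ≤ c := Real.sqrt_nonneg _
  have hc2 : c ^ 2 = 1/2 := Real.sq_sqrt (by norm_num)
  have hcC : (c : ℂ) * (c : ℂ) = 1/2 := by
    have : ((c:ℂ))^2 = ((c^2 : ℝ) : ℂ) := by push_cast; ring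
    rw [← sq, this, hc2]; norm_num
  have hnorm : ∀ (x : EuclideanSpace ℂ (Fin 4)),
      (x 0 = 0 ∧ x 1 = c ∧ x 2 = c ∧ x 3 = 0) ∨
      (x 0 = c ∧ x 1 = 0 ∧ x 2 = 0 ∧ x 3 = c) → ‖x‖ = 1 := by
    intro x hx
    rw [EuclideanSpace.norm_eq, Fin.sum_univ_four]
    rcases hx with ⟨h0, h1, h2, h3⟩ | ⟨h0, h1, h2, h3⟩ <;>
      simp [h0, h1, h2, h3, Complex.norm_real, abs_of_nonneg hc0] <;>
      rw [show c^2 + c^2 = 1 by rw [hc2]; norm_num] <;> exact Real.sqrt_one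
  have h1 : ((0, 0, 1/2) : ℂ × ℂ × ℂ) ∈ {p : ℂ × ℂ × ℂ | ∃ x : EuclideanSpace ℂ (Fin 4), ‖x‖ = 1 ∧
      p = (x 2 * starRingEnd ℂ (x 0), x 3 * starRingEnd ℂ (x 0), x 2 * starRingEnd ℂ (x 1))} := by
    refine ⟨(WithLp.toLp 2 ![0, (c:ℂ), (c:ℂ), 0] : EuclideanSpace ℂ (Fin 4)), hnorm _ (Or.inl ⟨rfl, rfl, rfl, rfl⟩), ?_⟩
    show ((0:ℂ), (0:ℂ), (1/2:ℂ)) = ((c:ℂ) * starRingEnd ℂ 0, (0:ℂ) * starRingEnd ℂ 0, (c:ℂ) * starRingEnd ℂ (c:ℂ))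
    simp [Complex.conj_ofReal, hcC]
  have h2 : ((0, 1/2, 0) : ℂ × ℂ × ℂ) ∈ {p : ℂ × ℂ × ℂ | ∃ x : EuclideanSpace ℂ (Fin 4), ‖x‖ = 1 ∧
      p = (x 2 * starRingEnd ℂ (x 0), x 3 * starRingEnd ℂ (x 0), x 2 * starRingEnd ℂ (x 1))} := by
    refine ⟨(WithLp.toLp 2 ![(c:ℂ), 0, 0, (c:ℂ)] : EuclideanSpace ℂ (Fin 4)), hnorm _ (Or.inr ⟨rfl, rfl, rfl, rfl⟩), ?_⟩
    show ((0:ℂ), (1/2:ℂ), (0:ℂ)) = ((0:ℂ) * starRingEnd ℂ (c:ℂ), (c:ℂ) * starRingEnd ℂ (c:ℂ), (0:ℂ) * starRingEnd ℂ 0)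
    simp [Complex.conj_ofReal, hcC]
  have h3 : ((0, 1/4, 1/4) : ℂ × ℂ × ℂ) ∉ {p : ℂ × ℂ × ℂ | ∃ x : EuclideanSpace ℂ (Fin 4), ‖x‖ = 1 ∧
      p = (x 2 * starRingEnd ℂ (x 0), x 3 * starRingEnd ℂ (x 0), x 2 * starRingEnd ℂ (x 1))} := by
    rintro ⟨x, -, hp⟩
    have e1 : (0:ℂ) = x 2 * starRingEnd ℂ (x 0) := congrArg Prod.fst hp
    have e2 : (1/4:ℂ) = x 3 * starRingEnd ℂ (x 0) := congrArg (fun p => p.2.1) hp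
    have e3 : (1/4:ℂ) = x 2 * starRingEnd ℂ (x 1) := congrArg (fun p => p.2.2) hp
    have hx0 : x 0 ≠ 0 := by
      intro h; rw [h] at e2; simp at e2
    have hx2 : x 2 = 0 := by
      rcases mul_eq_zero.mp e1.symm with h | h
      · exact h
      · rw [starRingEnd_apply, star_eq_zero] at h; exact (hx0 h).elim
    rw [hx2] at e3; simp at e3
  refine ⟨h1, h2, h3, fun hconv => ?_⟩
  have := hconv h1 h2 (by norm_num : (0:ℝ) ≤ 1/2) (by norm_num : (0:ℝ) ≤ 1/2) (by norm_num)
  apply h3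
  have heq : ((0:ℂ), (1/4:ℂ), (1/4:ℂ)) = (1/2:ℝ) • ((0:ℂ), (0:ℂ), (1/2:ℂ)) + (1/2:ℝ) • ((0:ℂ), (1/2:ℂ), (0:ℂ)) := by
    simp [Prod.smul_def, Prod.ext_iff, Complex.real_smul]
    norm_num
  rw [heq]; exact this
end

section
/- There exist three pairwise commuting linear operators T1, T2, T3 on ℂ^4 such that the joint numerical range W(T1,T2,T3) = {(⟨T1 x,x⟩, ⟨T2 x,x⟩, ⟨T3 x,x⟩) : x ∈ ℂ^4, ‖x‖=1} is not a convex subset of ℂ^3. -/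
open Matrix Complex

noncomputable def stmtM1 : Matrix (Fin 4) (Fin 4) ℂ :=
  fun i j => if i = 0 ∧ j = 2 then 1 else if i = 1 ∧ j = 3 then 1 else 0
noncomputable def stmtM2 : Matrix (Fin 4) (Fin 4) ℂ :=
  fun i j => if i = 0 ∧ j = 3 then 2 else 0
noncomputable def stmtM3 : Matrix (Fin 4) (Fin 4) ℂ :=
  fun i j => if i = 0 ∧ j = 2 then 1 else if i = 1 ∧ j = 3 then -1 else 0

theorem stmt_3 :
    ∃ T₁ T₂ T₃ : EuclideanSpace ℂ (Fin 4) →L[ℂ] EuclideanSpace ℂ (Fin 4),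
      Commute T₁ T₂ ∧ Commute T₁ T₃ ∧ Commute T₂ T₃ ∧
      ¬ Convex ℝ {p : ℂ × ℂ × ℂ | ∃ x : EuclideanSpace ℂ (Fin 4), ‖x‖ = 1 ∧
          p = ((inner ℂ x (T₁ x) : ℂ), (inner ℂ x (T₂ x) : ℂ), (inner ℂ x (T₃ x) : ℂ))} := by
  refine ⟨Matrix.toEuclideanCLM (𝕜 := ℂ) stmtM1, Matrix.toEuclideanCLM (𝕜 := ℂ) stmtM2,
    Matrix.toEuclideanCLM (𝕜 := ℂ) stmtM3, ?_, ?_, ?_, ?_⟩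
  · rw [Commute, SemiconjBy, ← _root_.map_mul, ← _root_.map_mul]
    congr 1
    ext i j
    fin_cases i <;> fin_cases j <;>
      simp (config := { decide := true }) [stmtM1, stmtM2, Matrix.mul_apply, Fin.sum_univ_four]
  · rw [Commute, SemiconjBy, ← _root_.map_mul, ← _root_.map_mul]
    congr 1
    ext i j
    fin_cases i <;> fin_cases j <;>
      simp (config := { decide := true }) [stmtM1, stmtM3, Matrix.mul_apply, Fin.sum_univ_four]
  · rw [Commute, SemiconjBy, ← _root_.map_mul, ← _root_.map_mul]
    congr 1
    ext i j
    fin_cases i <;> fin_cases j <;>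
      simp (config := { decide := true }) [stmtM2, stmtM3, Matrix.mul_apply, Fin.sum_univ_four]
  · intro hconv
    set z : ℂ := (1 + I)/2 with hz
    have habs : ‖z‖ ^ 2 = 1/2 := by
      rw [hz, Complex.sq_norm, map_div₀]
      norm_num [Complex.normSq_apply]
    have hnsq : Complex.normSq z = 1/2 := by rw [← Complex.sq_norm, habs]
    have hcz : (starRingEnd ℂ) z * z = 1/2 := by
      rw [mul_comm, Complex.mul_conj, hnsq]
      norm_num
    have hP : ((1/2 : ℂ), (0 : ℂ), (1/2 : ℂ)) ∈ {p : ℂ × ℂ × ℂ |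
        ∃ x : EuclideanSpace ℂ (Fin 4), ‖x‖ = 1 ∧
        p = ((inner ℂ x (Matrix.toEuclideanCLM (𝕜 := ℂ) stmtM1 x) : ℂ),
             (inner ℂ x (Matrix.toEuclideanCLM (𝕜 := ℂ) stmtM2 x) : ℂ),
             (inner ℂ x (Matrix.toEuclideanCLM (𝕜 := ℂ) stmtM3 x) : ℂ))} := by
      refine ⟨(WithLp.equiv 2 _).symm (fun i => if i = 0 ∨ i = 2 then z else 0), ?_, ?_⟩
      · rw [EuclideanSpace.norm_eq]
        simp (config := { decide := true }) [Fin.sum_univ_four, habs]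
        norm_num
      · simp only [WithLp.equiv_symm_apply, toEuclideanCLM_toLp]
        simp (config := { decide := true }) [PiLp.inner_apply, Fin.sum_univ_four,
          Matrix.toLin'_apply, Matrix.mulVec, dotProduct, stmtM1, stmtM2, stmtM3]
        norm_num [hcz, Complex.mul_conj, hnsq]
    have hQ : ((1/2 : ℂ), (0 : ℂ), (-(1/2) : ℂ)) ∈ {p : ℂ × ℂ × ℂ |
        ∃ x : EuclideanSpace ℂ (Fin 4), ‖x‖ = 1 ∧
        p = ((inner ℂ x (Matrix.toEuclideanCLM (𝕜 := ℂ) stmtM1 x) : ℂ),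
             (inner ℂ x (Matrix.toEuclideanCLM (𝕜 := ℂ) stmtM2 x) : ℂ),
             (inner ℂ x (Matrix.toEuclideanCLM (𝕜 := ℂ) stmtM3 x) : ℂ))} := by
      refine ⟨(WithLp.equiv 2 _).symm (fun i => if i = 1 ∨ i = 3 then z else 0), ?_, ?_⟩
      · rw [EuclideanSpace.norm_eq]
        simp (config := { decide := true }) [Fin.sum_univ_four, habs]
        norm_num
      · simp only [WithLp.equiv_symm_apply, toEuclideanCLM_toLp]
        simp (config := { decide := true }) [PiLp.inner_apply, Fin.sum_univ_four,
          Matrix.toLin'_apply, Matrix.mulVec, dotProduct, stmtM1, stmtM2, stmtM3]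
        norm_num [hcz, Complex.mul_conj, hnsq]
    have hmid := hconv hP hQ (by norm_num : (0:ℝ) ≤ 1/2) (by norm_num : (0:ℝ) ≤ 1/2)
      (by norm_num)
    rw [show (1/2 : ℝ) • ((1/2 : ℂ), (0 : ℂ), (1/2 : ℂ)) +
        (1/2 : ℝ) • ((1/2 : ℂ), (0 : ℂ), (-(1/2) : ℂ)) = ((1/2 : ℂ), (0 : ℂ), (0 : ℂ)) by
      simp [Prod.ext_iff, Complex.real_smul]
      norm_num] at hmid
    obtain ⟨x, hx, heq⟩ := hmid
    have hT : ∀ (M : Matrix (Fin 4) (Fin 4) ℂ) (y : EuclideanSpace ℂ (Fin 4)) (i : Fin 4),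
        (Matrix.toEuclideanCLM (𝕜 := ℂ) M) y i = M.mulVec (fun j => y j) i := fun _ _ _ => rfl
    simp (config := { decide := true }) [Prod.ext_iff, PiLp.inner_apply, Fin.sum_univ_four,
      hT, Matrix.mulVec, dotProduct, stmtM1, stmtM2, stmtM3] at heq
    obtain ⟨h1, h2, h3⟩ := heq
    rcases h2.symm with h | h
    · have hc : (2⁻¹ : ℂ) = 2 * ((starRingEnd ℂ) (x 0) * x 2) := by linear_combination h1 + h3
      rw [h] at hc
      simp at hc
    · have hc : (2⁻¹ : ℂ) = 2 * ((starRingEnd ℂ) (x 1) * x 3) := by linear_combination h1 - h3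
      rw [h] at hc
      simp at hc
end

section
/- Let T1, T2, T3 be the 4×4 complex matrices with all entries zero except (T1)_{1,3} = 1, (T2)_{1,4} = 1, (T3)_{2,3} = 1. Then the Asplund–Ptak numerical range W_AP(T1,T2,T3) = {(⟨T1 x,y⟩, ⟨T2 x,y⟩, ⟨T3 x,y⟩) : x,y ∈ ℂ^4, ‖x‖ ≤ 1, ‖y‖ ≤ 1} contains (0,0,1/2) and (0,1/2,0) but not (0,1/4,1/4); hence W_AP(T1,T2,T3) is not convex. -/
open Matrix

lemma inner_std (i j : Fin 4) (x y : EuclideanSpace ℂ (Fin 4)) :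
    (inner ℂ y (Matrix.toEuclideanLin (Matrix.single i j (1:ℂ)) x) : ℂ)
      = starRingEnd ℂ (y i) * x j := by
  simp [PiLp.inner_apply, toEuclideanLin_apply, mulVec, dotProduct, Matrix.single,
    Finset.mul_sum, ite_and, mul_comm]

theorem stmt_4 (T₁ T₂ T₃ : Matrix (Fin 4) (Fin 4) ℂ)
    (h₁ : T₁ = Matrix.single 0 2 1)
    (h₂ : T₂ = Matrix.single 0 3 1)
    (h₃ : T₃ = Matrix.single 1 2 1)
    (WAP : Set (ℂ × ℂ × ℂ))
    (hWAP : WAP = {p : ℂ × ℂ × ℂ | ∃ x y : EuclideanSpace ℂ (Fin 4), ‖x‖ ≤ 1 ∧ ‖y‖ ≤ 1 ∧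
      p = ((inner ℂ y (Matrix.toEuclideanLin T₁ x) : ℂ),
           (inner ℂ y (Matrix.toEuclideanLin T₂ x) : ℂ),
           (inner ℂ y (Matrix.toEuclideanLin T₃ x) : ℂ))}) :
    ((0, 0, 1/2) : ℂ × ℂ × ℂ) ∈ WAP ∧ ((0, 1/2, 0) : ℂ × ℂ × ℂ) ∈ WAP ∧
      ((0, 1/4, 1/4) : ℂ × ℂ × ℂ) ∉ WAP ∧ ¬ Convex ℝ WAP := by
  subst h₁ h₂ h₃ hWAP
  have hm1 : ((0, 0, 1/2) : ℂ × ℂ × ℂ) ∈ {p : ℂ × ℂ × ℂ |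
      ∃ x y : EuclideanSpace ℂ (Fin 4), ‖x‖ ≤ 1 ∧ ‖y‖ ≤ 1 ∧
      p = ((inner ℂ y (Matrix.toEuclideanLin (Matrix.single 0 2 (1:ℂ)) x) : ℂ),
           (inner ℂ y (Matrix.toEuclideanLin (Matrix.single 0 3 (1:ℂ)) x) : ℂ),
           (inner ℂ y (Matrix.toEuclideanLin (Matrix.single 1 2 (1:ℂ)) x) : ℂ))} := by
    refine ⟨EuclideanSpace.single 2 1, EuclideanSpace.single 1 (1/2), ?_, ?_, ?_⟩
    · simp [EuclideanSpace.norm_single]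
    · rw [EuclideanSpace.norm_single]; norm_num
    · simp only [inner_std, EuclideanSpace.single_apply]
      norm_num [Complex.conj_ofNat, show (3:Fin 4) ≠ 2 by decide, show (0:Fin 4) ≠ 1 by decide, show (2:Fin 4) ≠ 3 by decide, show (1:Fin 4) ≠ 0 by decide]
  have hm2 : ((0, 1/2, 0) : ℂ × ℂ × ℂ) ∈ {p : ℂ × ℂ × ℂ |
      ∃ x y : EuclideanSpace ℂ (Fin 4), ‖x‖ ≤ 1 ∧ ‖y‖ ≤ 1 ∧
      p = ((inner ℂ y (Matrix.toEuclideanLin (Matrix.single 0 2 (1:ℂ)) x) : ℂ),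
           (inner ℂ y (Matrix.toEuclideanLin (Matrix.single 0 3 (1:ℂ)) x) : ℂ),
           (inner ℂ y (Matrix.toEuclideanLin (Matrix.single 1 2 (1:ℂ)) x) : ℂ))} := by
    refine ⟨EuclideanSpace.single 3 1, EuclideanSpace.single 0 (1/2), ?_, ?_, ?_⟩
    · simp [EuclideanSpace.norm_single]
    · rw [EuclideanSpace.norm_single]; norm_num
    · simp only [inner_std, EuclideanSpace.single_apply]
      norm_num [Complex.conj_ofNat, show (3:Fin 4) ≠ 2 by decide, show (0:Fin 4) ≠ 1 by decide, show (2:Fin 4) ≠ 3 by decide, show (1:Fin 4) ≠ 0 by decide]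
  have hm3 : ((0, 1/4, 1/4) : ℂ × ℂ × ℂ) ∉ {p : ℂ × ℂ × ℂ |
      ∃ x y : EuclideanSpace ℂ (Fin 4), ‖x‖ ≤ 1 ∧ ‖y‖ ≤ 1 ∧
      p = ((inner ℂ y (Matrix.toEuclideanLin (Matrix.single 0 2 (1:ℂ)) x) : ℂ),
           (inner ℂ y (Matrix.toEuclideanLin (Matrix.single 0 3 (1:ℂ)) x) : ℂ),
           (inner ℂ y (Matrix.toEuclideanLin (Matrix.single 1 2 (1:ℂ)) x) : ℂ))} := by
    rintro ⟨x, y, -, -, hp⟩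
    simp only [inner_std, Prod.mk.injEq] at hp
    obtain ⟨ha, hb, hc⟩ := hp
    rcases mul_eq_zero.mp ha.symm with h | h
    · rw [h, zero_mul] at hb; norm_num at hb
    · rw [h, mul_zero] at hc; norm_num at hc
  refine ⟨hm1, hm2, hm3, ?_⟩
  intro hconv
  apply hm3
  have := hconv hm1 hm2 (by norm_num : (0:ℝ) ≤ 1/2) (by norm_num : (0:ℝ) ≤ 1/2)
    (by norm_num : (1/2:ℝ) + 1/2 = 1)
  convert this using 1
  simp [Prod.ext_iff, Prod.smul_mk, Complex.real_smul]
  norm_num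
end

section
/- Let T1 = [[0,0],[1,0]] and T2 = [[1,0],[0,-1]] on ℂ^2. Then trace T1 = trace T2 = 0, yet there is no orthonormal basis (u1,u2) of ℂ^2 with ⟨T1 u_j, u_j⟩ = 0 and ⟨T2 u_j, u_j⟩ = 0 for j = 1,2; i.e., the set of constant joint diagonals D_const(T1,T2) is empty. -/
open scoped Matrix

lemma key_aux (p : ℂ × ℂ) :
    ¬ ∃ u : OrthonormalBasis (Fin 2) ℂ (EuclideanSpace ℂ (Fin 2)),
        ∀ j, (inner ℂ (u j) (Matrix.toEuclideanLin !![(0:ℂ), 0; 1, 0] (u j)) : ℂ) = p.1 ∧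
             (inner ℂ (u j) (Matrix.toEuclideanLin !![(1:ℂ), 0; 0, -1] (u j)) : ℂ) = p.2 := by
  rintro ⟨u, hu⟩
  have hinner : ∀ (M : Matrix (Fin 2) (Fin 2) ℂ) (v : EuclideanSpace ℂ (Fin 2)),
      (inner ℂ v (Matrix.toEuclideanLin M v) : ℂ)
      = (starRingEnd ℂ) (v 0) * (M 0 0 * v 0 + M 0 1 * v 1)
        + (starRingEnd ℂ) (v 1) * (M 1 0 * v 0 + M 1 1 * v 1) := by
    intro M v
    simp [Matrix.toEuclideanLin_apply, PiLp.inner_apply, Fin.sum_univ_two, Matrix.mulVec,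
      dotProduct, mul_comm]
  have h1 : ∀ j, (starRingEnd ℂ) (u j 1) * (u j 0) = p.1 := by
    intro j
    have := (hu j).1
    rw [hinner] at this
    simpa [Matrix.cons_val_zero, Matrix.cons_val_one] using this
  have h2 : ∀ j, (starRingEnd ℂ) (u j 0) * (u j 0) - (starRingEnd ℂ) (u j 1) * (u j 1) = p.2 := by
    intro j
    have := (hu j).2
    rw [hinner] at this
    norm_num [Matrix.cons_val_zero, Matrix.cons_val_one, Matrix.head_cons] at this
    linear_combination this
  set U : Matrix (Fin 2) (Fin 2) ℂ := Matrix.of (fun i j => u i j) with hU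
  have horth := u.orthonormal
  rw [orthonormal_iff_ite] at horth
  have hUU : U * Uᴴ = 1 := by
    ext i k
    have h := horth k i
    rw [PiLp.inner_apply, Fin.sum_univ_two] at h
    simp only [RCLike.inner_apply] at h
    simp only [Matrix.mul_apply, Matrix.conjTranspose_apply, Fin.sum_univ_two, hU,
      Matrix.of_apply, Matrix.one_apply, RCLike.star_def]
    rw [h]
    by_cases hik : i = k <;> simp [hik, eq_comm]
  have hUU' : Uᴴ * U = 1 := mul_eq_one_comm.mp hUU
  have col10 : (starRingEnd ℂ) (u 0 1) * (u 0 0) + (starRingEnd ℂ) (u 1 1) * (u 1 0) = 0 := by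
    have := congrFun (congrFun hUU' 1) 0
    simpa [Matrix.mul_apply, Matrix.conjTranspose_apply, Fin.sum_univ_two, hU,
      Matrix.one_apply, RCLike.star_def] using this
  have col00 : (starRingEnd ℂ) (u 0 0) * (u 0 0) + (starRingEnd ℂ) (u 1 0) * (u 1 0) = 1 := by
    have := congrFun (congrFun hUU' 0) 0
    simpa [Matrix.mul_apply, Matrix.conjTranspose_apply, Fin.sum_univ_two, hU,
      Matrix.one_apply, RCLike.star_def] using this
  have col11 : (starRingEnd ℂ) (u 0 1) * (u 0 1) + (starRingEnd ℂ) (u 1 1) * (u 1 1) = 1 := by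
    have := congrFun (congrFun hUU' 1) 1
    simpa [Matrix.mul_apply, Matrix.conjTranspose_apply, Fin.sum_univ_two, hU,
      Matrix.one_apply, RCLike.star_def] using this
  have hp1 : p.1 = 0 := by
    have h := col10
    rw [h1 0, h1 1] at h
    linear_combination h / 2
  have hp2 : p.2 = 0 := by
    linear_combination (col00 - col11 - h2 0 - h2 1) / 2
  -- contradiction from j = 0
  have ha : (starRingEnd ℂ) (u 0 1) * (u 0 0) = 0 := by rw [h1 0, hp1]
  have hb : (starRingEnd ℂ) (u 0 0) * (u 0 0) - (starRingEnd ℂ) (u 0 1) * (u 0 1) = 0 := by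
    rw [h2 0, hp2]
  have hnorm := horth 0 0
  rw [PiLp.inner_apply, Fin.sum_univ_two] at hnorm
  simp only [RCLike.inner_apply, if_true, eq_self_iff_true] at hnorm
  have e1 : (starRingEnd ℂ) (u 0 0) * (u 0 0) = 1/2 := by linear_combination (hnorm + hb) / 2
  have e2 : (starRingEnd ℂ) (u 0 1) * (u 0 1) = 1/2 := by linear_combination (hnorm - hb) / 2
  have key : ((starRingEnd ℂ) (u 0 1) * (u 0 0)) * ((starRingEnd ℂ) (u 0 0) * (u 0 1))
      = 1/4 := by
    linear_combination ((starRingEnd ℂ) (u 0 0) * (u 0 0)) * e2 + (1/2 : ℂ) * e1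
  rw [ha, zero_mul] at key
  norm_num at key

theorem stmt_8 (T₁ T₂ : Matrix (Fin 2) (Fin 2) ℂ)
    (h₁ : T₁ = !![0, 0; 1, 0]) (h₂ : T₂ = !![1, 0; 0, -1]) :
    T₁.trace = 0 ∧ T₂.trace = 0 ∧
    (¬ ∃ u : OrthonormalBasis (Fin 2) ℂ (EuclideanSpace ℂ (Fin 2)),
        ∀ j, (inner ℂ (u j) (Matrix.toEuclideanLin T₁ (u j)) : ℂ) = 0 ∧
             (inner ℂ (u j) (Matrix.toEuclideanLin T₂ (u j)) : ℂ) = 0) ∧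
    {p : ℂ × ℂ | ∃ u : OrthonormalBasis (Fin 2) ℂ (EuclideanSpace ℂ (Fin 2)),
        ∀ j, (inner ℂ (u j) (Matrix.toEuclideanLin T₁ (u j)) : ℂ) = p.1 ∧
             (inner ℂ (u j) (Matrix.toEuclideanLin T₂ (u j)) : ℂ) = p.2} = ∅ := by
  subst h₁ h₂
  refine ⟨by simp [Matrix.trace_fin_two], by simp [Matrix.trace_fin_two], ?_, ?_⟩
  · exact key_aux (0, 0)
  · ext p
    simp only [Set.mem_setOf_eq, Set.mem_empty_iff_false, iff_false]
    exact key_aux p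
end

section
/- Let S1 = T1 ⊕ 0 and S2 = T2 ⊕ 0 on H = ℂ² ⊕ F with T1 = [[0,0],[1,0]] and T2 = [[1,0],[0,-1]], where F is a Hilbert space. If h = (x, f) ∈ H is a unit vector with ⟨S1 h, h⟩ = 0 and ⟨S2 h, h⟩ = 0, then x = 0. -/
theorem stmt_18 {F : Type*} [NormedAddCommGroup F] [InnerProductSpace ℂ F]
    (T₁ T₂ : Matrix (Fin 2) (Fin 2) ℂ)
    (h₁ : T₁ = !![0, 0; 1, 0]) (h₂ : T₂ = !![1, 0; 0, -1])
    (S₁ S₂ : WithLp 2 (EuclideanSpace ℂ (Fin 2) × F) →L[ℂ]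
        WithLp 2 (EuclideanSpace ℂ (Fin 2) × F))
    (hS₁ : ∀ h : WithLp 2 (EuclideanSpace ℂ (Fin 2) × F),
      (S₁ h).fst = Matrix.toEuclideanLin T₁ h.fst ∧ (S₁ h).snd = 0)
    (hS₂ : ∀ h : WithLp 2 (EuclideanSpace ℂ (Fin 2) × F),
      (S₂ h).fst = Matrix.toEuclideanLin T₂ h.fst ∧ (S₂ h).snd = 0)
    (h : WithLp 2 (EuclideanSpace ℂ (Fin 2) × F)) (hnorm : ‖h‖ = 1)
    (hz₁ : (inner ℂ h (S₁ h) : ℂ) = 0) (hz₂ : (inner ℂ h (S₂ h) : ℂ) = 0) :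
    h.fst = 0 := by
  set x : EuclideanSpace ℂ (Fin 2) := h.fst with hx
  have e₁ : (inner ℂ x (Matrix.toEuclideanLin T₁ x) : ℂ) = 0 := by
    rw [WithLp.prod_inner_apply] at hz₁
    change inner ℂ h.fst (S₁ h).fst + inner ℂ h.snd (S₁ h).snd = 0 at hz₁
    rw [(hS₁ h).1, (hS₁ h).2, inner_zero_right, add_zero] at hz₁
    exact hz₁
  have e₂ : (inner ℂ x (Matrix.toEuclideanLin T₂ x) : ℂ) = 0 := by
    rw [WithLp.prod_inner_apply] at hz₂
    change inner ℂ h.fst (S₂ h).fst + inner ℂ h.snd (S₂ h).snd = 0 at hz₂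
    rw [(hS₂ h).1, (hS₂ h).2, inner_zero_right, add_zero] at hz₂
    exact hz₂
  have k₁ : (starRingEnd ℂ) (x 1) * x 0 = 0 := by
    rw [Matrix.toEuclideanLin_apply, h₁] at e₁
    rw [mul_eq_zero, map_eq_zero, or_comm]
    simpa [PiLp.inner_apply, Fin.sum_univ_two, Matrix.mulVec, dotProduct,
      Fin.sum_univ_two] using e₁
  have k₂ : (starRingEnd ℂ) (x 0) * x 0 - (starRingEnd ℂ) (x 1) * x 1 = 0 := by
    rw [Matrix.toEuclideanLin_apply, h₂] at e₂
    have := e₂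
    simp [PiLp.inner_apply, Fin.sum_univ_two, Matrix.mulVec, dotProduct] at this
    linear_combination this
  have hn : ‖x 0‖ ^ 2 = ‖x 1‖ ^ 2 := by
    have h0 : ((‖x 0‖ : ℂ)) ^ 2 = ((‖x 1‖ : ℂ)) ^ 2 := by
      rw [← Complex.conj_mul', ← Complex.conj_mul']
      linear_combination k₂
    exact_mod_cast h0
  have hboth : x 0 = 0 ∧ x 1 = 0 := by
    rcases mul_eq_zero.1 k₁ with h' | h'
    · have h1 : x 1 = 0 := by simpa using congrArg (starRingEnd ℂ) h'
      have h0 : x 0 = 0 := by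
        have : ‖x 0‖ = 0 := by
          have := hn; rw [h1] at this; simpa using pow_eq_zero_iff (n := 2) (by norm_num) |>.1 (by simpa using this)
        simpa using this
      exact ⟨h0, h1⟩
    · have h1 : x 1 = 0 := by
        have : ‖x 1‖ = 0 := by
          have := hn; rw [h'] at this
          simpa using (pow_eq_zero_iff (n := 2) (by norm_num)).1 (by simpa using this.symm)
        simpa using this
      exact ⟨h', h1⟩
  ext i
  fin_cases i
  · exact hboth.1
  · exact hboth.2
end

section
/- Let T1, T2, T3 be the 4×4 matrices with (T1)_{1,3} = (T2)_{1,4} = (T3)_{2,3} = 1 and all other entries zero, and let F be any Hilbert space. Define T_k' = T_k ⊕ 0_F on H = ℂ⁴ ⊕ F for k = 1,2,3. Then (0,0,1/2) and (0,1/2,0) lie in the joint numerical range W(T1',T2',T3'), but (0,1/4,1/4) does not. Hence for every Hilbert space of dimension ≥ 4 there is a commuting triple with non-convex joint numerical range. -/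
open scoped ComplexConjugate

lemma aux_norm_one_of_inner {E : Type*} [NormedAddCommGroup E] [InnerProductSpace ℂ E] {x : E}
    (h : (inner ℂ x x : ℂ) = 1) : ‖x‖ = 1 := by
  have h2 := inner_self_eq_norm_sq_to_K (𝕜 := ℂ) x
  rw [h] at h2
  have h3 : (1:ℝ) = ‖x‖^2 := by exact_mod_cast congrArg Complex.re h2
  nlinarith [norm_nonneg x]

noncomputable def auxc : ℂ := ((Real.sqrt 2)⁻¹ : ℝ)

lemma auxc_conj : conj auxc = auxc := by simp [auxc]

lemma auxc_mul : auxc * auxc = 1/2 := by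
  simp only [auxc]; norm_cast
  rw [← Real.sqrt_inv, Real.mul_self_sqrt (by norm_num)]; norm_num

lemma aux_inner_std (i j : Fin 4) (x : EuclideanSpace ℂ (Fin 4)) :
    (inner ℂ x (Matrix.toEuclideanLin (Matrix.single i j 1) x) : ℂ)
      = conj (x i) * x j := by
  simp [PiLp.inner_apply, Matrix.toEuclideanLin_apply, Matrix.mulVec, dotProduct,
    Matrix.single, RCLike.inner_apply, Finset.mul_sum, mul_ite, ite_and]
  ring

lemma aux_key_alg (x0 x1 x2 x3 : ℂ) (h1 : conj x0 * x2 = 0) (h2 : conj x0 * x3 = 1/4) :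
    conj x1 * x2 ≠ 1/4 := by
  have hx0 : conj x0 ≠ 0 := by rintro h; rw [h] at h2; simp at h2
  have hx2 : x2 = 0 := by
    rcases mul_eq_zero.1 h1 with h | h
    · exact absurd h hx0
    · exact h
  simp [hx2]

lemma aux_exists_on {H : Type*} [NormedAddCommGroup H] [InnerProductSpace ℂ H]
    (hdim : 4 ≤ Module.rank ℂ H) : ∃ e : Fin 4 → H, Orthonormal ℂ e := by
  obtain ⟨s, hcard, hli⟩ := le_rank_iff_exists_linearIndependent_finset.mp
    (by exact_mod_cast hdim)
  have hequiv : Fin 4 ≃ ↥(s : Set H) := by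
    refine (Fintype.equivFinOfCardEq ?_).symm
    simpa using hcard
  have hli2 : LinearIndependent ℂ (fun i : Fin 4 => ((hequiv i : H))) :=
    hli.comp hequiv hequiv.injective
  exact ⟨InnerProductSpace.gramSchmidtNormed ℂ (fun i : Fin 4 => ((hequiv i : H))),
    InnerProductSpace.gramSchmidtNormed_orthonormal hli2⟩

/-- The commuting triple `T₁,T₂,T₃` on `ℂ⁴`, extended by `0` to `ℂ⁴ ⊕ F`, has joint numerical
range containing `(0,0,1/2)` and `(0,1/2,0)` but not `(0,1/4,1/4)`; hence every Hilbert space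
`H` of dimension `≥ 4` carries a commuting triple with non-convex joint numerical range. -/
theorem stmt_19 {F : Type*} [NormedAddCommGroup F] [InnerProductSpace ℂ F]
    {H : Type*} [NormedAddCommGroup H] [InnerProductSpace ℂ H] [CompleteSpace H]
    (hdim : 4 ≤ Module.rank ℂ H)
    (T₁ T₂ T₃ : Matrix (Fin 4) (Fin 4) ℂ)
    (h₁ : T₁ = Matrix.single 0 2 1)
    (h₂ : T₂ = Matrix.single 0 3 1)
    (h₃ : T₃ = Matrix.single 1 2 1)
    (S₁ S₂ S₃ : WithLp 2 (EuclideanSpace ℂ (Fin 4) × F) →L[ℂ]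
        WithLp 2 (EuclideanSpace ℂ (Fin 4) × F))
    (hS₁ : ∀ h : WithLp 2 (EuclideanSpace ℂ (Fin 4) × F),
      (S₁ h).fst = Matrix.toEuclideanLin T₁ h.fst ∧ (S₁ h).snd = 0)
    (hS₂ : ∀ h : WithLp 2 (EuclideanSpace ℂ (Fin 4) × F),
      (S₂ h).fst = Matrix.toEuclideanLin T₂ h.fst ∧ (S₂ h).snd = 0)
    (hS₃ : ∀ h : WithLp 2 (EuclideanSpace ℂ (Fin 4) × F),
      (S₃ h).fst = Matrix.toEuclideanLin T₃ h.fst ∧ (S₃ h).snd = 0)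
    (W' : Set (ℂ × ℂ × ℂ))
    (hW' : W' = {p : ℂ × ℂ × ℂ | ∃ h : WithLp 2 (EuclideanSpace ℂ (Fin 4) × F), ‖h‖ = 1 ∧
      p = ((inner ℂ h (S₁ h) : ℂ), (inner ℂ h (S₂ h) : ℂ), (inner ℂ h (S₃ h) : ℂ))}) :
    (((0, 0, 1/2) : ℂ × ℂ × ℂ) ∈ W' ∧ ((0, 1/2, 0) : ℂ × ℂ × ℂ) ∈ W' ∧
      ((0, 1/4, 1/4) : ℂ × ℂ × ℂ) ∉ W') ∧
    ∃ A₁ A₂ A₃ : H →L[ℂ] H, Commute A₁ A₂ ∧ Commute A₁ A₃ ∧ Commute A₂ A₃ ∧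
      ¬ Convex ℝ {p : ℂ × ℂ × ℂ | ∃ x : H, ‖x‖ = 1 ∧
          p = ((inner ℂ x (A₁ x) : ℂ), (inner ℂ x (A₂ x) : ℂ), (inner ℂ x (A₃ x) : ℂ))} := by
  subst h₁ h₂ h₃ hW'
  have key : ∀ (S : WithLp 2 (EuclideanSpace ℂ (Fin 4) × F) →L[ℂ]
      WithLp 2 (EuclideanSpace ℂ (Fin 4) × F)) (i j : Fin 4),
      (∀ h, (S h).fst = Matrix.toEuclideanLin (Matrix.single i j 1) h.fst ∧
        (S h).snd = 0) →
      ∀ h, (inner ℂ h (S h) : ℂ) = conj (h.fst i) * h.fst j := by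
    intro S i j hS h
    rw [WithLp.prod_inner_apply]
    show inner ℂ h.fst (S h).fst + inner ℂ h.snd (S h).snd = _
    rw [(hS h).1, (hS h).2, inner_zero_right, add_zero, aux_inner_std]
  constructor
  · refine ⟨?_, ?_, ?_⟩
    · -- (0,0,1/2)
      refine ⟨(WithLp.equiv 2 _).symm
        (((WithLp.equiv 2 _).symm ![0, auxc, auxc, 0] : EuclideanSpace ℂ (Fin 4)), 0), ?_, ?_⟩
      · apply aux_norm_one_of_inner
        simp [WithLp.prod_inner_apply, PiLp.inner_apply, Fin.sum_univ_four, auxc_conj, -inner_self_eq_norm_sq_to_K]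
        rw [auxc_mul]; norm_num
      · rw [key S₁ 0 2 hS₁, key S₂ 0 3 hS₂, key S₃ 1 2 hS₃]
        simp [auxc_conj]
        rw [auxc_mul]; norm_num
    · -- (0,1/2,0)
      refine ⟨(WithLp.equiv 2 _).symm
        (((WithLp.equiv 2 _).symm ![auxc, 0, 0, auxc] : EuclideanSpace ℂ (Fin 4)), 0), ?_, ?_⟩
      · apply aux_norm_one_of_inner
        simp [WithLp.prod_inner_apply, PiLp.inner_apply, Fin.sum_univ_four, auxc_conj, -inner_self_eq_norm_sq_to_K]
        rw [auxc_mul]; norm_num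
      · rw [key S₁ 0 2 hS₁, key S₂ 0 3 hS₂, key S₃ 1 2 hS₃]
        simp [auxc_conj]
        rw [auxc_mul]; norm_num
    · -- (0,1/4,1/4) ∉
      rintro ⟨h, -, heq⟩
      rw [key S₁ 0 2 hS₁, key S₂ 0 3 hS₂, key S₃ 1 2 hS₃, Prod.ext_iff, Prod.ext_iff] at heq
      obtain ⟨e1, e2, e3⟩ := heq
      exact aux_key_alg (h.fst 0) (h.fst 1) (h.fst 2) (h.fst 3) e1.symm e2.symm e3.symm
  · obtain ⟨e, he⟩ := aux_exists_on hdim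
    have hee := orthonormal_iff_ite.mp he
    refine ⟨(innerSL ℂ (e 2)).smulRight (e 0), (innerSL ℂ (e 3)).smulRight (e 0),
      (innerSL ℂ (e 2)).smulRight (e 1), ?_, ?_, ?_, ?_⟩
    · show _ * _ = _ * _
      ext x
      simp [ContinuousLinearMap.mul_apply, inner_smul_right, hee]
    · show _ * _ = _ * _
      ext x
      simp [ContinuousLinearMap.mul_apply, inner_smul_right, hee]
    · show _ * _ = _ * _
      ext x
      simp [ContinuousLinearMap.mul_apply, inner_smul_right, hee]
    · intro hconv
      have hp : ((0 : ℂ), (0 : ℂ), (1/2 : ℂ)) ∈ {p : ℂ × ℂ × ℂ | ∃ x : H, ‖x‖ = 1 ∧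
          p = ((inner ℂ x (((innerSL ℂ (e 2)).smulRight (e 0)) x) : ℂ),
            (inner ℂ x (((innerSL ℂ (e 3)).smulRight (e 0)) x) : ℂ),
            (inner ℂ x (((innerSL ℂ (e 2)).smulRight (e 1)) x) : ℂ))} := by
        refine ⟨auxc • e 1 + auxc • e 2, ?_, ?_⟩
        · apply aux_norm_one_of_inner
          simp [inner_add_left, inner_add_right, inner_smul_left, inner_smul_right, hee,
            auxc_conj, -inner_self_eq_norm_sq_to_K]
          rw [auxc_mul]; norm_num
        · simp [inner_add_left, inner_add_right, inner_smul_left, inner_smul_right, hee,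
            auxc_conj, -inner_self_eq_norm_sq_to_K]
          rw [auxc_mul]; norm_num
      have hq : ((0 : ℂ), (1/2 : ℂ), (0 : ℂ)) ∈ {p : ℂ × ℂ × ℂ | ∃ x : H, ‖x‖ = 1 ∧
          p = ((inner ℂ x (((innerSL ℂ (e 2)).smulRight (e 0)) x) : ℂ),
            (inner ℂ x (((innerSL ℂ (e 3)).smulRight (e 0)) x) : ℂ),
            (inner ℂ x (((innerSL ℂ (e 2)).smulRight (e 1)) x) : ℂ))} := by
        refine ⟨auxc • e 0 + auxc • e 3, ?_, ?_⟩
        · apply aux_norm_one_of_inner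
          simp [inner_add_left, inner_add_right, inner_smul_left, inner_smul_right, hee,
            auxc_conj, -inner_self_eq_norm_sq_to_K]
          rw [auxc_mul]; norm_num
        · simp [inner_add_left, inner_add_right, inner_smul_left, inner_smul_right, hee,
            auxc_conj, -inner_self_eq_norm_sq_to_K]
          rw [auxc_mul]; norm_num
      have hmid := hconv hp hq (by norm_num : (0:ℝ) ≤ 1/2) (by norm_num : (0:ℝ) ≤ 1/2)
        (by norm_num)
      have hmideq : (1/2:ℝ) • ((0 : ℂ), (0 : ℂ), (1/2 : ℂ)) + (1/2:ℝ) • ((0 : ℂ), (1/2 : ℂ), (0 : ℂ))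
          = ((0 : ℂ), (1/4 : ℂ), (1/4 : ℂ)) := by
        simp [Prod.smul_def, Prod.ext_iff, Complex.real_smul]
        norm_num
      rw [hmideq] at hmid
      obtain ⟨x, -, heq⟩ := hmid
      have hval : ∀ i j : Fin 4,
          (inner ℂ x (((innerSL ℂ (e j)).smulRight (e i)) x) : ℂ)
            = conj (inner ℂ x (e j) : ℂ) * (inner ℂ x (e i) : ℂ) := by
        intro i j
        simp [inner_smul_right]
      rw [hval 0 2, hval 0 3, hval 1 2, Prod.ext_iff, Prod.ext_iff] at heq
      obtain ⟨q1, q2, q3⟩ := heq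
      have hy0 : (inner ℂ x (e 0) : ℂ) ≠ 0 := by
        rintro h0
        rw [h0, mul_zero] at q2
        norm_num at q2
      have hy2 : conj (inner ℂ x (e 2) : ℂ) = 0 := by
        rcases mul_eq_zero.1 q1.symm with h | h
        · exact h
        · exact absurd h hy0
      rw [hy2, zero_mul] at q3
      norm_num at q3
end
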